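/- In the group H_{a,b} = ⟨[e_a,1],[1,e_b],[1,j],[j,1]⟩ ≤ SO(4) (a, b odd, coprime), every element of the form h = [e_a,1]^{k₁}[1,e_b]^{k₂}[1,j][j,1] is conjugate in H_{a,b} either to [j,j] or to -[j,j] = [1,j]²[j,j]; specifically h = h̃ · ([1,j]²)^{k₁+k₂} [1,j][j,1] · h̃⁻¹ with h̃ = [e_a,1]^{k₁(a+1)/2}[1,e_b]^{k₂(b+1)/2}. -/

import Mathlib

open Quaternion Real

noncomputable section
open scoped Classical

/-- The linear map `x ↦ l · x · r̄` on `ℍ ≅ ℝ⁴`. -/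
def qRot (l r : ℍ[ℝ]) : ℍ[ℝ] →ₗ[ℝ] ℍ[ℝ] where
  toFun x := l * x * star r
  map_add' x y := by simp [mul_add, add_mul]
  map_smul' c x := by simp [mul_smul_comm, smul_mul_assoc]

/-- The rotation `[l,r] : x ↦ l · x · r̄` as an invertible linear map of `ℝ⁴ ≅ ℍ`
(for `l, r ≠ 0`; junk value `1` otherwise). -/
def qRotUnit (l r : ℍ[ℝ]) : (ℍ[ℝ] →ₗ[ℝ] ℍ[ℝ])ˣ :=
  if h : l ≠ 0 ∧ r ≠ 0 then
    { val := qRot l r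
      inv := qRot l⁻¹ r⁻¹
      val_inv := by
        apply LinearMap.ext; intro x
        show l * (l⁻¹ * x * star r⁻¹) * star r = x
        have h1 : star (r⁻¹ : ℍ[ℝ]) * star r = 1 := by
          rw [← star_mul, mul_inv_cancel₀ h.2, star_one]
        have h2 : l * l⁻¹ = 1 := mul_inv_cancel₀ h.1
        calc l * (l⁻¹ * x * star r⁻¹) * star r
            = (l * l⁻¹) * x * (star r⁻¹ * star r) := by noncomm_ring
          _ = x := by rw [h1, h2, one_mul, mul_one]
      inv_val := by
        apply LinearMap.ext; intro x
        show l⁻¹ * (l * x * star r) * star r⁻¹ = x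
        have h1 : star r * star (r⁻¹ : ℍ[ℝ]) = 1 := by
          rw [← star_mul, inv_mul_cancel₀ h.2, star_one]
        have h2 : l⁻¹ * l = 1 := inv_mul_cancel₀ h.1
        calc l⁻¹ * (l * x * star r) * star r⁻¹
            = (l⁻¹ * l) * x * (star r * star r⁻¹) := by noncomm_ring
          _ = x := by rw [h1, h2, one_mul, mul_one] }
  else 1

/-- The unit quaternion `e_p = cos(π/p) + sin(π/p)·i`. -/
def eQ (p : ℕ) : ℍ[ℝ] := ⟨Real.cos (π / p), Real.sin (π / p), 0, 0⟩

/-- The quaternion unit `j`. -/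
def jQ : ℍ[ℝ] := ⟨0, 0, 1, 0⟩

def cQ (θ : ℝ) : ℍ[ℝ] := ⟨Real.cos θ, Real.sin θ, 0, 0⟩

lemma cQ_mul (θ φ : ℝ) : cQ θ * cQ φ = cQ (θ + φ) := by
  ext <;> simp only [Quaternion.re_mul, Quaternion.imI_mul, Quaternion.imJ_mul, Quaternion.imK_mul] <;> simp [cQ, Quaternion.ext_iff, cos_add, sin_add] <;> ring


lemma cQ_mul_j (θ : ℝ) : cQ θ * jQ = jQ * cQ (-θ) := by
  ext <;> simp only [Quaternion.re_mul, Quaternion.imI_mul, Quaternion.imJ_mul, Quaternion.imK_mul] <;> simp [cQ, jQ]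

lemma cQ_zero : cQ 0 = 1 := by ext <;> simp [cQ]

lemma cQ_pi : cQ π = -1 := by ext <;> simp [cQ]

lemma cQ_ne_zero (θ : ℝ) : cQ θ ≠ 0 := by
  intro h
  have h1 : Real.cos θ = 0 := congrArg QuaternionAlgebra.re h
  have h2 : Real.sin θ = 0 := congrArg QuaternionAlgebra.imI h
  have := sin_sq_add_cos_sq θ
  rw [h1, h2] at this; norm_num at this

lemma cQ_pow (θ : ℝ) (n : ℕ) : (cQ θ) ^ n = cQ (n * θ) := by
  induction n with
  | zero => simp [cQ_zero]
  | succ n ih => rw [pow_succ, ih, cQ_mul]; push_cast; ring_nf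

lemma cQ_add_nat_pi (x : ℝ) (k : ℕ) : cQ (x + k * π) = (-1 : ℍ[ℝ]) ^ k * cQ x := by
  induction k with
  | zero => simp
  | succ k ih =>
    have : (x + (k+1 : ℕ) * π) = (x + k * π) + π := by push_cast; ring
    rw [this, ← cQ_mul, ih, cQ_pi, pow_succ]
    rw [mul_assoc, mul_assoc, (by ext <;> simp only [Quaternion.re_mul, Quaternion.imI_mul, Quaternion.imJ_mul, Quaternion.imK_mul] <;> simp [cQ] : cQ x * (-1 : ℍ[ℝ]) = -1 * cQ x)]

lemma jQ_mul_jQ : jQ * jQ = -1 := by ext <;> simp only [Quaternion.re_mul, Quaternion.imI_mul, Quaternion.imJ_mul, Quaternion.imK_mul] <;> simp [jQ]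

lemma jQ_ne_zero : jQ ≠ 0 := by
  intro h; have := congrArg QuaternionAlgebra.imJ h; simp [jQ] at this

lemma qRotUnit_val {l r : ℍ[ℝ]} (hl : l ≠ 0) (hr : r ≠ 0) :
    (qRotUnit l r).val = qRot l r := by
  rw [qRotUnit, dif_pos ⟨hl, hr⟩]

lemma qRotUnit_mul {l r l' r' : ℍ[ℝ]} (hl : l ≠ 0) (hr : r ≠ 0) (hl' : l' ≠ 0)
    (hr' : r' ≠ 0) : qRotUnit l r * qRotUnit l' r' = qRotUnit (l * l') (r * r') := by
  apply Units.ext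
  rw [Units.val_mul, qRotUnit_val hl hr, qRotUnit_val hl' hr',
    qRotUnit_val (mul_ne_zero hl hl') (mul_ne_zero hr hr')]
  apply LinearMap.ext; intro x
  show l * (l' * x * star r') * star r = (l * l') * x * star (r * r')
  rw [star_mul]; noncomm_ring

lemma qRotUnit_one : qRotUnit 1 1 = (1 : (ℍ[ℝ] →ₗ[ℝ] ℍ[ℝ])ˣ) := by
  apply Units.ext
  rw [qRotUnit_val one_ne_zero one_ne_zero]
  apply LinearMap.ext; intro x
  show (1 : ℍ[ℝ]) * x * star (1 : ℍ[ℝ]) = x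
  simp

lemma qRotUnit_neg {l r : ℍ[ℝ]} (hl : l ≠ 0) (hr : r ≠ 0) :
    qRotUnit (-l) (-r) = qRotUnit l r := by
  apply Units.ext
  rw [qRotUnit_val (neg_ne_zero.2 hl) (neg_ne_zero.2 hr), qRotUnit_val hl hr]
  apply LinearMap.ext; intro x
  show (-l) * x * star (-r) = l * x * star r
  rw [star_neg]; noncomm_ring

lemma qRotUnit_pow_left {l : ℍ[ℝ]} (hl : l ≠ 0) (n : ℕ) :
    (qRotUnit l 1) ^ n = qRotUnit (l ^ n) 1 := by
  induction n with
  | zero => simp [qRotUnit_one]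
  | succ n ih =>
    rw [pow_succ, ih, qRotUnit_mul (pow_ne_zero n hl) one_ne_zero hl one_ne_zero,
      pow_succ, mul_one]

lemma qRotUnit_pow_right {r : ℍ[ℝ]} (hr : r ≠ 0) (n : ℕ) :
    (qRotUnit 1 r) ^ n = qRotUnit 1 (r ^ n) := by
  induction n with
  | zero => simp [qRotUnit_one]
  | succ n ih =>
    rw [pow_succ, ih, qRotUnit_mul one_ne_zero (pow_ne_zero n hr) one_ne_zero hr,
      pow_succ, mul_one]

lemma qRotUnit_neg_pow {l r : ℍ[ℝ]} (hl : l ≠ 0) (hr : r ≠ 0) (n : ℕ) :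
    qRotUnit ((-1 : ℍ[ℝ]) ^ n * l) ((-1 : ℍ[ℝ]) ^ n * r) = qRotUnit l r := by
  rcases Nat.even_or_odd n with h | h
  · rw [h.neg_one_pow, one_mul, one_mul]
  · rw [h.neg_one_pow, neg_one_mul, neg_one_mul, qRotUnit_neg hl hr]

lemma neg_one_pow_comm' (q : ℍ[ℝ]) (k : ℕ) : q * (-1 : ℍ[ℝ]) ^ k = (-1 : ℍ[ℝ]) ^ k * q := by
  rcases Nat.even_or_odd k with h | h <;> rw [h.neg_one_pow] <;> simp


/-- The group `H_{a,b} = ⟨[e_a,1], [1,e_b], [1,j], [j,1]⟩`. -/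
def Hgrp (a b : ℕ) : Subgroup (ℍ[ℝ] →ₗ[ℝ] ℍ[ℝ])ˣ :=
  Subgroup.closure {qRotUnit (eQ a) 1, qRotUnit 1 (eQ b), qRotUnit 1 jQ, qRotUnit jQ 1}


lemma Hgrp_conj_eq (a b : ℕ) (ha : Odd a) (hb : Odd b) (hab : Nat.Coprime a b)
    (k₁ k₂ : ℕ) :
    (qRotUnit (eQ a) 1) ^ k₁ * (qRotUnit 1 (eQ b)) ^ k₂ *
        (qRotUnit 1 jQ) * (qRotUnit jQ 1) =
      ((qRotUnit (eQ a) 1) ^ (k₁ * ((a + 1) / 2)) *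
          (qRotUnit 1 (eQ b)) ^ (k₂ * ((b + 1) / 2))) *
        (((qRotUnit 1 jQ) ^ 2) ^ (k₁ + k₂) * ((qRotUnit 1 jQ) * (qRotUnit jQ 1))) *
        ((qRotUnit (eQ a) 1) ^ (k₁ * ((a + 1) / 2)) *
          (qRotUnit 1 (eQ b)) ^ (k₂ * ((b + 1) / 2)))⁻¹ := by
  obtain ⟨c, hc⟩ := ha
  obtain ⟨d, hd⟩ := hb
  have hma : k₁ * ((a + 1) / 2) = k₁ * (c + 1) := by
    have : (a + 1) / 2 = c + 1 := by omega
    rw [this]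
  have hmb : k₂ * ((b + 1) / 2) = k₂ * (d + 1) := by
    have : (b + 1) / 2 = d + 1 := by omega
    rw [this]
  have heA : eQ a = cQ (π / a) := rfl
  have heB : eQ b = cQ (π / b) := rfl
  have hA : ∀ n : ℕ, (qRotUnit (eQ a) 1) ^ n = qRotUnit (cQ (n * (π / a))) 1 := fun n => by
    rw [heA, qRotUnit_pow_left (cQ_ne_zero _), cQ_pow]
  have hB : ∀ n : ℕ, (qRotUnit 1 (eQ b)) ^ n = qRotUnit 1 (cQ (n * (π / b))) := fun n => by
    rw [heB, qRotUnit_pow_right (cQ_ne_zero _), cQ_pow]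
  have hJ2 : (qRotUnit 1 jQ) ^ 2 = qRotUnit 1 (-1 : ℍ[ℝ]) := by
    rw [sq, qRotUnit_mul one_ne_zero jQ_ne_zero one_ne_zero jQ_ne_zero, jQ_mul_jQ, one_mul]
  have hZ : ((qRotUnit 1 jQ) ^ 2) ^ (k₁ + k₂) = qRotUnit 1 ((-1 : ℍ[ℝ]) ^ (k₁ + k₂)) := by
    rw [hJ2, qRotUnit_pow_right (by norm_num)]
  rw [eq_mul_inv_iff_mul_eq, hma, hmb, hA, hA, hB, hB, hZ]
  simp only [qRotUnit_mul, cQ_ne_zero, jQ_ne_zero, one_ne_zero, ne_eq, not_false_iff,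
    mul_ne_zero, one_mul, mul_one, neg_ne_zero, pow_ne_zero, not_false_eq_true]
  rw [qRotUnit_mul (cQ_ne_zero _) (cQ_ne_zero _) jQ_ne_zero
    (mul_ne_zero (pow_ne_zero _ (neg_ne_zero.2 one_ne_zero)) jQ_ne_zero)]
  have haR : (a : ℝ) ≠ 0 := by
    have : 0 < a := by omega
    exact_mod_cast this.ne'
  have hbR : (b : ℝ) ≠ 0 := by
    have : 0 < b := by omega
    exact_mod_cast this.ne'
  have e1 : -((k₁ : ℝ) * (π / a)) + (k₁ * (c + 1) : ℕ) * (π / a)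
      = -((k₁ * (c + 1) : ℕ) * (π / a)) + (k₁ : ℝ) * π := by
    field_simp
    rw [hc]
    push_cast
    ring
  have e2 : -((k₂ : ℝ) * (π / b)) + (k₂ * (d + 1) : ℕ) * (π / b)
      = -((k₂ * (d + 1) : ℕ) * (π / b)) + (k₂ : ℝ) * π := by
    field_simp
    rw [hd]
    push_cast
    ring
  have hL : cQ (k₁ * (π / a)) * jQ * cQ ((k₁ * (c + 1) : ℕ) * (π / a))
      = (-1 : ℍ[ℝ]) ^ k₁ * (cQ ((k₁ * (c + 1) : ℕ) * (π / a)) * jQ) := by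
    rw [cQ_mul_j, cQ_mul_j, mul_assoc, cQ_mul, e1, cQ_add_nat_pi, ← mul_assoc,
      neg_one_pow_comm' jQ k₁, mul_assoc]
  have hR' : cQ (k₂ * (π / b)) * jQ * cQ ((k₂ * (d + 1) : ℕ) * (π / b))
      = (-1 : ℍ[ℝ]) ^ k₂ * (cQ ((k₂ * (d + 1) : ℕ) * (π / b)) * jQ) := by
    rw [cQ_mul_j, cQ_mul_j, mul_assoc, cQ_mul, e2, cQ_add_nat_pi, ← mul_assoc,
      neg_one_pow_comm' jQ k₂, mul_assoc]
  have sgn : ((-1 : ℍ[ℝ]) ^ k₁) * ((-1 : ℍ[ℝ]) ^ (k₁ + k₂)) = (-1 : ℍ[ℝ]) ^ k₂ := by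
    rw [pow_add, ← mul_assoc, ← pow_add, ← two_mul, pow_mul]
    norm_num
  have hR : cQ (k₂ * (π / b)) * jQ * cQ ((k₂ * (d + 1) : ℕ) * (π / b))
      = (-1 : ℍ[ℝ]) ^ k₁ *
        (cQ ((k₂ * (d + 1) : ℕ) * (π / b)) * ((-1 : ℍ[ℝ]) ^ (k₁ + k₂) * jQ)) := by
    rw [← mul_assoc (cQ _), neg_one_pow_comm' (cQ _) (k₁ + k₂), mul_assoc ((-1 : ℍ[ℝ]) ^ (k₁ + k₂)),
      ← mul_assoc ((-1 : ℍ[ℝ]) ^ k₁), sgn]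
    exact hR'
  rw [hL, hR]
  exact qRotUnit_neg_pow (mul_ne_zero (cQ_ne_zero _) jQ_ne_zero)
    (mul_ne_zero (cQ_ne_zero _)
      (mul_ne_zero (pow_ne_zero _ (neg_ne_zero.2 one_ne_zero)) jQ_ne_zero)) k₁

/-- In `H_{a,b}` (`a, b` odd and coprime), every element of the form
`h = [e_a,1]^{k₁}[1,e_b]^{k₂}[1,j][j,1]` satisfies
`h = h̃ · ([1,j]²)^{k₁+k₂} · [1,j][j,1] · h̃⁻¹` with
`h̃ = [e_a,1]^{k₁(a+1)/2}[1,e_b]^{k₂(b+1)/2}`; in particular it is conjugate in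
`H_{a,b}` either to `[j,j]` or to `-[j,j] = [1,j]²[j,j]`. -/
theorem Hgrp_conj (a b : ℕ) (ha : Odd a) (hb : Odd b) (hab : Nat.Coprime a b)
    (k₁ k₂ : ℕ) :
    (qRotUnit (eQ a) 1) ^ k₁ * (qRotUnit 1 (eQ b)) ^ k₂ *
        (qRotUnit 1 jQ) * (qRotUnit jQ 1) =
      ((qRotUnit (eQ a) 1) ^ (k₁ * ((a + 1) / 2)) *
          (qRotUnit 1 (eQ b)) ^ (k₂ * ((b + 1) / 2))) *
        (((qRotUnit 1 jQ) ^ 2) ^ (k₁ + k₂) * ((qRotUnit 1 jQ) * (qRotUnit jQ 1))) *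
        ((qRotUnit (eQ a) 1) ^ (k₁ * ((a + 1) / 2)) *
          (qRotUnit 1 (eQ b)) ^ (k₂ * ((b + 1) / 2)))⁻¹ ∧
    (∃ u ∈ Hgrp a b,
      (qRotUnit (eQ a) 1) ^ k₁ * (qRotUnit 1 (eQ b)) ^ k₂ *
          (qRotUnit 1 jQ) * (qRotUnit jQ 1) =
        u * (qRotUnit jQ jQ) * u⁻¹ ∨
      (qRotUnit (eQ a) 1) ^ k₁ * (qRotUnit 1 (eQ b)) ^ k₂ *
          (qRotUnit 1 jQ) * (qRotUnit jQ 1) =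
        u * ((qRotUnit 1 jQ) ^ 2 * qRotUnit jQ jQ) * u⁻¹) := by
  have h1 := Hgrp_conj_eq a b ha hb hab k₁ k₂
  refine ⟨h1, (qRotUnit (eQ a) 1) ^ (k₁ * ((a + 1) / 2)) *
      (qRotUnit 1 (eQ b)) ^ (k₂ * ((b + 1) / 2)), ?_, ?_⟩
  · exact mul_mem (pow_mem (Subgroup.subset_closure (by simp [Hgrp])) _)
      (pow_mem (Subgroup.subset_closure (by simp [Hgrp])) _)
  · have hJJ : (qRotUnit 1 jQ) * (qRotUnit jQ 1) = qRotUnit jQ jQ := by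
      rw [qRotUnit_mul one_ne_zero jQ_ne_zero jQ_ne_zero one_ne_zero, one_mul, mul_one]
    have hJ2 : (qRotUnit 1 jQ) ^ 2 = qRotUnit 1 (-1 : ℍ[ℝ]) := by
      rw [sq, qRotUnit_mul one_ne_zero jQ_ne_zero one_ne_zero jQ_ne_zero, jQ_mul_jQ, one_mul]
    rcases Nat.even_or_odd (k₁ + k₂) with he | ho
    · left
      rw [h1, hJ2, qRotUnit_pow_right (neg_ne_zero.2 one_ne_zero), he.neg_one_pow,
        qRotUnit_one, one_mul, hJJ]
    · right
      rw [h1, hJ2, qRotUnit_pow_right (neg_ne_zero.2 one_ne_zero), ho.neg_one_pow, hJJ]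


end
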